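/- Let X be a separable complex Banach space and T a continuous linear operator on X. The following are equivalent: (1) T is syndetically transitive; (2) for every separable complex Banach space Y and every weakly mixing continuous linear operator S on Y, the operator T ⊕ S is weakly mixing on X × Y; (3) for every separable complex Banach space Y and every weakly mixing continuous linear operator S on Y, the operator T ⊕ S is hypercyclic on X × Y. -/

import Mathlib

/-- A set `A ⊆ ℕ` is syndetic if it has bounded gaps. -/
def Syndetic (A : Set ℕ) : Prop :=
  ∃ b : ℕ, 0 < b ∧ ∀ n : ℕ, ∃ m ∈ A, n ≤ m ∧ m < n + b

/-- The set of hitting times `N_T(U, V) = {n : T^n(U) ∩ V ≠ ∅}`. -/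
def hittingTimes {X : Type*} [NormedAddCommGroup X] [NormedSpace ℂ X]
    (T : X →L[ℂ] X) (U V : Set X) : Set ℕ :=
  {n : ℕ | ((T ^ n) '' U ∩ V).Nonempty}

/-- `T` is syndetically transitive if all return sets `N_T(U,V)` are syndetic. -/
def SyndeticallyTransitive {X : Type*} [NormedAddCommGroup X] [NormedSpace ℂ X]
    (T : X →L[ℂ] X) : Prop :=
  ∀ U V : Set X, IsOpen U → U.Nonempty → IsOpen V → V.Nonempty →
    Syndetic (hittingTimes T U V)

/-- `T` is hypercyclic if it has a dense orbit. -/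
def Hypercyclic {X : Type*} [NormedAddCommGroup X] [NormedSpace ℂ X]
    (T : X →L[ℂ] X) : Prop :=
  ∃ x : X, Dense (Set.range fun n : ℕ => (T ^ n) x)

/-- `T` is weakly mixing if `T ⊕ T` has a dense orbit on `X × X`. -/
def WeaklyMixing {X : Type*} [NormedAddCommGroup X] [NormedSpace ℂ X]
    (T : X →L[ℂ] X) : Prop :=
  ∃ x y : X, Dense (Set.range fun n : ℕ => ((T ^ n) x, (T ^ n) y))

/-! ### Combinatorics of subsets of ℕ -/

def Thick (A : Set ℕ) : Prop := ∀ L : ℕ, ∃ n : ℕ, ∀ j ≤ L, n + j ∈ A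

def ThickSyn (A : Set ℕ) : Prop := ∀ L : ℕ, Syndetic {n : ℕ | ∀ j ≤ L, n + j ∈ A}

lemma Syndetic.mono {A B : Set ℕ} (h : A ⊆ B) (hA : Syndetic A) : Syndetic B := by
  obtain ⟨b, hb0, hb⟩ := hA
  refine ⟨b, hb0, fun n => ?_⟩
  obtain ⟨m, hm, h1, h2⟩ := hb n
  exact ⟨m, h hm, h1, h2⟩

lemma ThickSyn.mono {A B : Set ℕ} (h : A ⊆ B) (hA : ThickSyn A) : ThickSyn B := by
  intro L
  refine (hA L).mono ?_
  intro n hn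
  simp only [Set.mem_setOf_eq] at hn ⊢
  exact fun j hj => h (hn j hj)

lemma ThickSyn.syndetic {A : Set ℕ} (hA : ThickSyn A) : Syndetic A := by
  refine (hA 0).mono ?_
  intro n hn
  simp only [Set.mem_setOf_eq] at hn
  simpa using hn 0 le_rfl

lemma ThickSyn.inter {A B : Set ℕ} (hA : ThickSyn A) (hB : ThickSyn B) :
    ThickSyn (A ∩ B) := by
  intro L
  obtain ⟨a, ha0, ha⟩ := hA L
  obtain ⟨c, hc0, hc⟩ := hB (L + a)
  refine ⟨c + a, by omega, fun n => ?_⟩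
  obtain ⟨m, hmE, hm1, hm2⟩ := hc n
  obtain ⟨m', hm'D, hm'1, hm'2⟩ := ha m
  refine ⟨m', fun j hj => ⟨hm'D j hj, ?_⟩, by omega, by omega⟩
  have : m' + j = m + (m' - m + j) := by omega
  rw [this]
  exact hmE _ (by omega)

lemma Syndetic.inter_thick {A B : Set ℕ} (hA : Syndetic A) (hB : Thick B) :
    (A ∩ B).Nonempty := by
  obtain ⟨b, hb0, hb⟩ := hA
  obtain ⟨n, hn⟩ := hB b
  obtain ⟨m, hmA, h1, h2⟩ := hb n
  have : m = n + (m - n) := by omega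
  exact ⟨m, hmA, by rw [this]; exact hn _ (by omega)⟩

/-! ### Basics on hitting times and orbits -/

open Set Metric TopologicalSpace

section Basics

variable {E : Type*} [NormedAddCommGroup E] [NormedSpace ℂ E]
variable {F : Type*} [NormedAddCommGroup F] [NormedSpace ℂ F]

lemma mem_hittingTimes_iff {T : E →L[ℂ] E} {U V : Set E} {n : ℕ} :
    n ∈ hittingTimes T U V ↔ ∃ x ∈ U, (T ^ n) x ∈ V := by
  constructor
  · rintro ⟨y, ⟨x, hx, rfl⟩, hy⟩
    exact ⟨x, hx, hy⟩
  · rintro ⟨x, hx, hv⟩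
    exact ⟨(T ^ n) x, ⟨x, hx, rfl⟩, hv⟩

lemma prodMap_pow_apply (T : E →L[ℂ] E) (S : F →L[ℂ] F) (n : ℕ) (x : E) (y : F) :
    ((T.prodMap S) ^ n) (x, y) = ((T ^ n) x, (S ^ n) y) := by
  induction n with
  | zero => simp
  | succ n ih =>
      rw [pow_succ', pow_succ', pow_succ', ContinuousLinearMap.mul_apply,
        ContinuousLinearMap.mul_apply, ContinuousLinearMap.mul_apply, ih]
      rfl

lemma pow_apply_norm_le (T : E →L[ℂ] E) (j : ℕ) (z : E) :
    ‖(T ^ j) z‖ ≤ (max 1 ‖T‖) ^ j * ‖z‖ := by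
  induction j with
  | zero => simp
  | succ j ih =>
      rw [pow_succ', ContinuousLinearMap.mul_apply, pow_succ']
      calc ‖T ((T ^ j) z)‖ ≤ ‖T‖ * ‖(T ^ j) z‖ := T.le_opNorm _
        _ ≤ max 1 ‖T‖ * ((max 1 ‖T‖) ^ j * ‖z‖) := by
            refine mul_le_mul (le_max_right _ _) ih (norm_nonneg _) (by positivity)
        _ = max 1 ‖T‖ * (max 1 ‖T‖) ^ j * ‖z‖ := by ring

lemma neBot_punctured [Nontrivial E] (x : E) : (nhdsWithin x {x}ᶜ).NeBot := by
  haveI : (nhdsWithin (0:ℂ) {(0:ℂ)}ᶜ).NeBot := by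
    simpa using NormedField.nhdsNE_neBot (0 : ℂ)
  exact Module.punctured_nhds_neBot ℂ E x

lemma dense_orbit_tail [Nontrivial E] {T : E →L[ℂ] E} {x : E}
    (hx : Dense (Set.range fun n : ℕ => (T ^ n) x)) (k : ℕ) :
    Dense (Set.range fun n : ℕ => (T ^ (n + k)) x) := by
  haveI : ∀ z : E, (nhdsWithin z {z}ᶜ).NeBot := neBot_punctured
  have h2 := hx.diff_finite (((Set.finite_Iio k).image (fun i : ℕ => (T ^ i) x)))
  refine h2.mono ?_
  rintro y ⟨⟨n, rfl⟩, hy2⟩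
  have hk : k ≤ n := by
    by_contra h
    exact hy2 ⟨n, Set.mem_Iio.2 (by omega), rfl⟩
  exact ⟨n - k, by show (T ^ (n - k + k)) x = (T ^ n) x; rw [Nat.sub_add_cancel hk]⟩

lemma dense_orbit_hitting_pos {T : E →L[ℂ] E} {x : E}
    (hx : Dense (Set.range fun n : ℕ => (T ^ n) x))
    {U V : Set E} (hU : IsOpen U) (hUne : U.Nonempty) (hV : IsOpen V) (hVne : V.Nonempty) :
    ∃ n, 0 < n ∧ n ∈ hittingTimes T U V := by
  by_cases hE : Nontrivial E
  · obtain ⟨_, ⟨n, rfl⟩, hnU⟩ := hx.exists_mem_open hU hUne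
    obtain ⟨_, ⟨m, rfl⟩, hmV⟩ := (dense_orbit_tail hx (n + 1)).exists_mem_open hV hVne
    refine ⟨m + 1, by omega, mem_hittingTimes_iff.2 ⟨(T ^ n) x, hnU, ?_⟩⟩
    rw [← ContinuousLinearMap.mul_apply, ← pow_add]
    have : m + 1 + n = m + (n + 1) := by omega
    rw [this]
    exact hmV
  · rw [not_nontrivial_iff_subsingleton] at hE
    obtain ⟨u, hu⟩ := hUne
    obtain ⟨v, hv⟩ := hVne
    exact ⟨1, one_pos, mem_hittingTimes_iff.2
      ⟨u, hu, by rwa [Subsingleton.elim ((T ^ 1) u) v]⟩⟩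

lemma dense_orbit_hitting {T : E →L[ℂ] E} {x : E}
    (hx : Dense (Set.range fun n : ℕ => (T ^ n) x))
    {U V : Set E} (hU : IsOpen U) (hUne : U.Nonempty) (hV : IsOpen V) (hVne : V.Nonempty) :
    (hittingTimes T U V).Nonempty := by
  obtain ⟨n, _, hn⟩ := dense_orbit_hitting_pos hx hU hUne hV hVne
  exact ⟨n, hn⟩

lemma dense_orbit_denseRange_pow {T : E →L[ℂ] E} {x : E}
    (hx : Dense (Set.range fun n : ℕ => (T ^ n) x)) (k : ℕ) :
    DenseRange (T ^ k) := by
  by_cases hE : Nontrivial E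
  · have h := dense_orbit_tail hx k
    refine Dense.mono ?_ h
    rintro y ⟨n, rfl⟩
    exact ⟨(T ^ n) x, by rw [← ContinuousLinearMap.mul_apply, ← pow_add, Nat.add_comm]⟩
  · rw [not_nontrivial_iff_subsingleton] at hE
    intro y
    have : y = (T ^ k) 0 := Subsingleton.elim _ _
    exact this ▸ subset_closure ⟨0, rfl⟩

/-- Birkhoff transitivity theorem. -/
lemma trans_dense_orbit [CompleteSpace E] [SeparableSpace E] {T : E →L[ℂ] E}
    (h : ∀ U V : Set E, IsOpen U → U.Nonempty → IsOpen V → V.Nonempty →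
      (hittingTimes T U V).Nonempty) :
    ∃ x : E, Dense (Set.range fun n : ℕ => (T ^ n) x) := by
  haveI : SecondCountableTopology E := UniformSpace.secondCountable_of_separable E
  obtain ⟨b, hbc, hbe, hbb⟩ := TopologicalSpace.exists_countable_basis E
  haveI : Countable b := hbc.to_subtype
  have hGd : Dense (⋂ (W : b), (⋃ n : ℕ, (fun z => (T ^ n) z) ⁻¹' (W : Set E))) := by
    refine dense_iInter_of_isOpen (fun W => isOpen_iUnion fun n =>
      (hbb.isOpen W.2).preimage (T ^ n).continuous) (fun W => ?_)
    rw [dense_iff_inter_open]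
    intro O hO hOne
    have hWne : (W : Set E).Nonempty := by
      rcases W with ⟨W, hW⟩
      exact Set.nonempty_iff_ne_empty.2 (fun hc => hbe (hc ▸ hW))
    obtain ⟨n, hn⟩ := h O (W : Set E) hO hOne (hbb.isOpen W.2) hWne
    obtain ⟨x, hxO, hxW⟩ := mem_hittingTimes_iff.1 hn
    exact ⟨x, hxO, Set.mem_iUnion.2 ⟨n, hxW⟩⟩
  obtain ⟨x, hx⟩ := hGd.nonempty
  refine ⟨x, dense_iff_inter_open.2 fun O hO hOne => ?_⟩
  obtain ⟨z, hz⟩ := hOne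
  obtain ⟨W, hWb, hzW, hWO⟩ := hbb.exists_subset_of_mem_open hz hO
  have hx' := Set.mem_iInter.1 hx ⟨W, hWb⟩
  obtain ⟨n, hn⟩ := Set.mem_iUnion.1 hx'
  exact ⟨(T ^ n) x, hWO hn, ⟨n, rfl⟩⟩

end Basics

section Part2

open Set Metric TopologicalSpace

variable {E : Type*} [NormedAddCommGroup E] [NormedSpace ℂ E]
variable {F : Type*} [NormedAddCommGroup F] [NormedSpace ℂ F]

lemma hittingTimes_mono {T : E →L[ℂ] E} {U U' V V' : Set E} (hU : U ⊆ U') (hV : V ⊆ V') :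
    hittingTimes T U V ⊆ hittingTimes T U' V' := fun n hn => by
  obtain ⟨x, hx, h2⟩ := mem_hittingTimes_iff.1 hn
  exact mem_hittingTimes_iff.2 ⟨x, hU hx, hV h2⟩

lemma hittingTimes_prod (T : E →L[ℂ] E) (S : F →L[ℂ] F) (U U' : Set E) (V V' : Set F) :
    hittingTimes (T.prodMap S) (U ×ˢ V) (U' ×ˢ V') =
      hittingTimes T U U' ∩ hittingTimes S V V' := by
  ext n
  constructor
  · intro hn
    obtain ⟨p, hp, hp2⟩ := mem_hittingTimes_iff.1 hn
    obtain ⟨x, y⟩ := p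
    rw [prodMap_pow_apply] at hp2
    exact ⟨mem_hittingTimes_iff.2 ⟨x, hp.1, hp2.1⟩, mem_hittingTimes_iff.2 ⟨y, hp.2, hp2.2⟩⟩
  · rintro ⟨h1, h2⟩
    obtain ⟨x, hx, hx2⟩ := mem_hittingTimes_iff.1 h1
    obtain ⟨y, hy, hy2⟩ := mem_hittingTimes_iff.1 h2
    exact mem_hittingTimes_iff.2 ⟨(x, y), ⟨hx, hy⟩, by rw [prodMap_pow_apply]; exact ⟨hx2, hy2⟩⟩

lemma pow_comm_apply (T : E →L[ℂ] E) (m n : ℕ) (z : E) :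
    (T ^ m) ((T ^ n) z) = (T ^ n) ((T ^ m) z) := by
  rw [← ContinuousLinearMap.mul_apply, ← pow_add, add_comm, pow_add,
    ContinuousLinearMap.mul_apply]

lemma pow_add_apply (T : E →L[ℂ] E) (m n : ℕ) (z : E) :
    (T ^ (m + n)) z = (T ^ m) ((T ^ n) z) := by
  rw [← ContinuousLinearMap.mul_apply, ← pow_add]

/-- Syndetically transitive operators have thickly syndetic return sets. -/
theorem synTrans_thickSyn [CompleteSpace E] [SeparableSpace E] {T : E →L[ℂ] E}
    (hT : SyndeticallyTransitive T) {U V : Set E} (hU : IsOpen U) (hUne : U.Nonempty)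
    (hV : IsOpen V) (hVne : V.Nonempty) : ThickSyn (hittingTimes T U V) := by
  obtain ⟨u, hu⟩ := hUne
  obtain ⟨v, hv⟩ := hVne
  obtain ⟨ε1, hε1, hbu⟩ := Metric.isOpen_iff.1 hU u hu
  obtain ⟨ε2, hε2, hbv⟩ := Metric.isOpen_iff.1 hV v hv
  set δ := min ε1 ε2 / 2 with hδdef
  have hδ : 0 < δ := by
    have := lt_min hε1 hε2
    positivity
  set M := max 1 ‖T‖ with hMdef
  have hM : 1 ≤ M := le_max_left _ _
  have hM0 : 0 < M := lt_of_lt_of_le one_pos hM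
  -- T is hypercyclic
  obtain ⟨x0, hx0⟩ := trans_dense_orbit (T := T) (fun U' V' hU' hU'n hV' hV'n => by
    obtain ⟨b, hb0, hb⟩ := hT U' V' hU' hU'n hV' hV'n
    obtain ⟨m, hm, _, _⟩ := hb 0
    exact ⟨m, hm⟩)
  -- Part A : approach 0 from near u
  have hA : ThickSyn (hittingTimes T (ball u δ) (ball (0:E) δ)) := by
    intro L
    have hc0 : (0:ℝ) < M ^ L := pow_pos hM0 L
    have hS := hT (ball u δ) (ball (0:E) (δ / M ^ L)) isOpen_ball ⟨u, mem_ball_self hδ⟩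
      isOpen_ball ⟨0, mem_ball_self (by positivity)⟩
    refine hS.mono ?_
    intro n hn
    simp only [Set.mem_setOf_eq]
    intro j hj
    obtain ⟨x, hx, hx2⟩ := mem_hittingTimes_iff.1 hn
    refine mem_hittingTimes_iff.2 ⟨x, hx, ?_⟩
    rw [mem_ball, dist_zero_right] at hx2 ⊢
    have hrw : (T ^ (n + j)) x = (T ^ j) ((T ^ n) x) := by
      rw [add_comm]; exact pow_add_apply T j n x
    rw [hrw]
    calc ‖(T ^ j) ((T ^ n) x)‖ ≤ M ^ j * ‖(T ^ n) x‖ := pow_apply_norm_le T j _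
      _ ≤ M ^ L * ‖(T ^ n) x‖ :=
          mul_le_mul_of_nonneg_right (pow_le_pow_right₀ hM hj) (norm_nonneg _)
      _ < M ^ L * (δ / M ^ L) := by
          exact mul_lt_mul_of_pos_left hx2 hc0
      _ = δ := by field_simp
  -- Part B : approach v from near 0
  have hB : ThickSyn (hittingTimes T (ball (0:E) δ) (ball v δ)) := by
    intro L
    have hc0 : (0:ℝ) < M ^ L := pow_pos hM0 L
    -- choose w with ‖T^L w - v‖ < δ/2
    obtain ⟨w, hw⟩ : ∃ w, ‖(T ^ L) w - v‖ < δ / 2 := by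
      have hdr := dense_orbit_denseRange_pow hx0 L
      have hcl := hdr v
      rw [Metric.mem_closure_iff] at hcl
      obtain ⟨_, ⟨w, rfl⟩, hw⟩ := hcl (δ / 2) (by positivity)
      exact ⟨w, by rwa [dist_comm, dist_eq_norm] at hw⟩
    set η := δ / (2 * M ^ L) with hηdef
    have hη : 0 < η := by positivity
    have hS := hT (ball (0:E) η) (ball w η) isOpen_ball ⟨0, mem_ball_self hη⟩
      isOpen_ball ⟨w, mem_ball_self hη⟩
    refine hS.mono ?_
    intro n hn
    simp only [Set.mem_setOf_eq]
    intro j hj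
    obtain ⟨y, hy, hy2⟩ := mem_hittingTimes_iff.1 hn
    rw [mem_ball, dist_zero_right] at hy
    rw [mem_ball, dist_eq_norm] at hy2
    refine mem_hittingTimes_iff.2 ⟨(T ^ (L - j)) y, ?_, ?_⟩
    · rw [mem_ball, dist_zero_right]
      calc ‖(T ^ (L - j)) y‖ ≤ M ^ (L - j) * ‖y‖ := pow_apply_norm_le T _ _
        _ ≤ M ^ L * ‖y‖ :=
            mul_le_mul_of_nonneg_right (pow_le_pow_right₀ hM (by omega)) (norm_nonneg _)
        _ < M ^ L * η := mul_lt_mul_of_pos_left hy hc0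
        _ = δ / 2 := by rw [hηdef]; field_simp
        _ < δ := by linarith
    · rw [mem_ball, dist_eq_norm]
      have e1 : n + j + (L - j) = L + n := by omega
      have hrw : (T ^ (n + j)) ((T ^ (L - j)) y) = (T ^ L) ((T ^ n) y) := by
        rw [← pow_add_apply, e1, pow_add_apply]
      rw [hrw]
      have hsplit : (T ^ L) ((T ^ n) y) - v
          = (T ^ L) ((T ^ n) y - w) + ((T ^ L) w - v) := by
        rw [map_sub]; abel
      rw [hsplit]
      calc ‖(T ^ L) ((T ^ n) y - w) + ((T ^ L) w - v)‖
          ≤ ‖(T ^ L) ((T ^ n) y - w)‖ + ‖(T ^ L) w - v‖ := norm_add_le _ _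
        _ < M ^ L * η + δ / 2 := by
            refine add_lt_add_of_le_of_lt ?_ hw
            calc ‖(T ^ L) ((T ^ n) y - w)‖ ≤ M ^ L * ‖(T ^ n) y - w‖ := pow_apply_norm_le T L _
              _ ≤ M ^ L * η := mul_le_mul_of_nonneg_left (le_of_lt hy2) (le_of_lt hc0)
        _ = δ / 2 + δ / 2 := by rw [hηdef]; field_simp
        _ = δ := by ring
  -- combine
  have hkey := hA.inter hB
  refine hkey.mono ?_
  intro n hn
  obtain ⟨h1, h2⟩ := hn
  obtain ⟨x, hx, hx2⟩ := mem_hittingTimes_iff.1 h1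
  obtain ⟨y, hy, hy2⟩ := mem_hittingTimes_iff.1 h2
  rw [mem_ball, dist_eq_norm] at hx hx2 hy hy2
  rw [sub_zero] at hx2 hy
  refine mem_hittingTimes_iff.2 ⟨x + y, ?_, ?_⟩
  · refine hbu ?_
    rw [mem_ball, dist_eq_norm]
    have h2δ : δ + δ ≤ ε1 := by
      rw [hδdef]
      have := min_le_left ε1 ε2
      linarith
    calc ‖x + y - u‖ = ‖(x - u) + y‖ := by rw [add_sub_right_comm]
      _ ≤ ‖x - u‖ + ‖y‖ := norm_add_le _ _
      _ < δ + δ := add_lt_add hx hy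
      _ ≤ ε1 := h2δ
  · refine hbv ?_
    rw [mem_ball, dist_eq_norm, map_add]
    have h2δ : δ + δ ≤ ε2 := by
      rw [hδdef]
      have := min_le_right ε1 ε2
      linarith
    calc ‖(T ^ n) x + (T ^ n) y - v‖ = ‖((T ^ n) y - v) + (T ^ n) x‖ := by
          rw [show (T ^ n) x + (T ^ n) y - v = (T ^ n) y - v + (T ^ n) x from by abel]
      _ ≤ ‖(T ^ n) y - v‖ + ‖(T ^ n) x‖ := norm_add_le _ _
      _ < δ + δ := add_lt_add hy2 hx2
      _ ≤ ε2 := h2δ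

end Part2
section Part3

open Set Metric TopologicalSpace

variable {E : Type*} [NormedAddCommGroup E] [NormedSpace ℂ E]
variable {F : Type*} [NormedAddCommGroup F] [NormedSpace ℂ F]

/-- Furstenberg's intersection lemma. -/
lemma furstenberg {S : F →L[ℂ] F}
    (h2 : ∀ G H : Set (F × F), IsOpen G → G.Nonempty → IsOpen H → H.Nonempty →
      (hittingTimes (S.prodMap S) G H).Nonempty)
    {U1 V1 U2 V2 : Set F} (hU1 : IsOpen U1) (hU1n : U1.Nonempty) (hV1 : IsOpen V1)
    (hV1n : V1.Nonempty) (hU2 : IsOpen U2) (hU2n : U2.Nonempty) (hV2 : IsOpen V2)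
    (hV2n : V2.Nonempty) :
    ∃ U V : Set F, IsOpen U ∧ U.Nonempty ∧ IsOpen V ∧ V.Nonempty ∧
      hittingTimes S U V ⊆ hittingTimes S U1 V1 ∩ hittingTimes S U2 V2 := by
  obtain ⟨n, hn⟩ := h2 (U1 ×ˢ V1) (U2 ×ˢ V2) (hU1.prod hV1) (hU1n.prod hV1n)
    (hU2.prod hV2) (hU2n.prod hV2n)
  obtain ⟨p, hp, hp2⟩ := mem_hittingTimes_iff.1 hn
  obtain ⟨x, y⟩ := p
  rw [prodMap_pow_apply] at hp2
  refine ⟨U1 ∩ (S ^ n) ⁻¹' U2, V1 ∩ (S ^ n) ⁻¹' V2,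
    hU1.inter (hU2.preimage (S ^ n).continuous), ⟨x, hp.1, hp2.1⟩,
    hV1.inter (hV2.preimage (S ^ n).continuous), ⟨y, hp.2, hp2.2⟩, ?_⟩
  intro m hm
  obtain ⟨z, ⟨hz1, hz2⟩, hmz1, hmz2⟩ := mem_hittingTimes_iff.1 hm
  refine ⟨mem_hittingTimes_iff.2 ⟨z, hz1, hmz1⟩, mem_hittingTimes_iff.2 ⟨(S ^ n) z, hz2, ?_⟩⟩
  rw [pow_comm_apply]
  exact hmz2

/-- For a weakly mixing operator, pairwise intersections of hitting time sets are thick. -/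
theorem wm_thick [CompleteSpace F] [SeparableSpace F] {S : F →L[ℂ] F} (hS : WeaklyMixing S)
    {V1 V1' V2 V2' : Set F} (h1 : IsOpen V1) (h1n : V1.Nonempty) (h1' : IsOpen V1')
    (h1n' : V1'.Nonempty) (h2 : IsOpen V2) (h2n : V2.Nonempty) (h2' : IsOpen V2')
    (h2n' : V2'.Nonempty) :
    Thick (hittingTimes S V1 V1' ∩ hittingTimes S V2 V2') := by
  obtain ⟨x, y, hd⟩ := hS
  set R := S.prodMap S with hRdef
  have hdR : Dense (Set.range fun n : ℕ => (R ^ n) (x, y)) := by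
    have : (fun n : ℕ => (R ^ n) (x, y)) = fun n : ℕ => ((S ^ n) x, (S ^ n) y) :=
      funext fun n => prodMap_pow_apply S S n x y
    rw [this]
    exact hd
  -- transitivity of R
  have transR : ∀ G H : Set (F × F), IsOpen G → G.Nonempty → IsOpen H → H.Nonempty →
      (hittingTimes R G H).Nonempty := fun G H hG hGn hH hHn =>
    dense_orbit_hitting hdR hG hGn hH hHn
  -- transitivity of S
  have hdS : Dense (Set.range fun n : ℕ => (S ^ n) x) := by
    have hsurj : DenseRange (Prod.fst : F × F → F) :=
      Function.Surjective.denseRange Prod.fst_surjective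
    have := hsurj.comp (f := fun n : ℕ => ((S ^ n) x, (S ^ n) y))
      (by rw [show (fun n : ℕ => ((S ^ n) x, (S ^ n) y)) = _ from rfl]; exact hd)
      continuous_fst
    exact this
  have transS : ∀ G H : Set F, IsOpen G → G.Nonempty → IsOpen H → H.Nonempty →
      (hittingTimes S G H).Nonempty := fun G H hG hGn hH hHn =>
    dense_orbit_hitting hdS hG hGn hH hHn
  -- pairwise intersections of R-hitting sets are nonempty
  have pairR : ∀ G1 H1 G2 H2 : Set (F × F), IsOpen G1 → G1.Nonempty → IsOpen H1 →
      H1.Nonempty → IsOpen G2 → G2.Nonempty → IsOpen H2 → H2.Nonempty →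
      (hittingTimes R G1 H1 ∩ hittingTimes R G2 H2).Nonempty := by
    intro G1 H1 G2 H2 hG1 hG1n hH1 hH1n hG2 hG2n hH2 hH2n
    -- reduce to boxes
    obtain ⟨g1, hg1⟩ := hG1n
    obtain ⟨a1, b1, ha1, hb1, hga1, hgb1, hab1⟩ := isOpen_prod_iff.1 hG1 g1.1 g1.2 (by simpa)
    obtain ⟨h1c, hh1⟩ := hH1n
    obtain ⟨a1', b1', ha1', hb1', hga1', hgb1', hab1'⟩ :=
      isOpen_prod_iff.1 hH1 h1c.1 h1c.2 (by simpa)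
    obtain ⟨g2, hg2⟩ := hG2n
    obtain ⟨a2, b2, ha2, hb2, hga2, hgb2, hab2⟩ := isOpen_prod_iff.1 hG2 g2.1 g2.2 (by simpa)
    obtain ⟨h2c, hh2⟩ := hH2n
    obtain ⟨a2', b2', ha2', hb2', hga2', hgb2', hab2'⟩ :=
      isOpen_prod_iff.1 hH2 h2c.1 h2c.2 (by simpa)
    -- fourfold intersection of S-hitting sets
    obtain ⟨Ua, Va, hUa, hUan, hVa, hVan, hsub_a⟩ := furstenberg transR ha1
      ⟨g1.1, hga1⟩ ha1' ⟨h1c.1, hga1'⟩ hb1 ⟨g1.2, hgb1⟩ hb1' ⟨h1c.2, hgb1'⟩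
    obtain ⟨Ub, Vb, hUb, hUbn, hVb, hVbn, hsub_b⟩ := furstenberg transR ha2
      ⟨g2.1, hga2⟩ ha2' ⟨h2c.1, hga2'⟩ hb2 ⟨g2.2, hgb2⟩ hb2' ⟨h2c.2, hgb2'⟩
    obtain ⟨Uc, Vc, hUc, hUcn, hVc, hVcn, hsub_c⟩ := furstenberg transR hUa hUan hVa hVan
      hUb hUbn hVb hVbn
    obtain ⟨n, hn⟩ := transS Uc Vc hUc hUcn hVc hVcn
    have hnab := hsub_c hn
    have hna := hsub_a hnab.1
    have hnb := hsub_b hnab.2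
    refine ⟨n, ?_, ?_⟩
    · have : n ∈ hittingTimes R (a1 ×ˢ b1) (a1' ×ˢ b1') := by
        rw [hRdef, hittingTimes_prod]
        exact ⟨hna.1, hna.2⟩
      exact hittingTimes_mono hab1 hab1' this
    · have : n ∈ hittingTimes R (a2 ×ˢ b2) (a2' ×ˢ b2') := by
        rw [hRdef, hittingTimes_prod]
        exact ⟨hnb.1, hnb.2⟩
      exact hittingTimes_mono hab2 hab2' this
  -- now the thickness argument at the level of R
  obtain ⟨v1, hv1⟩ := h1n
  obtain ⟨v2, hv2⟩ := h2n
  obtain ⟨v1', hv1'⟩ := h1n'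
  obtain ⟨v2', hv2'⟩ := h2n'
  obtain ⟨ε1, hε1, hb1⟩ := Metric.isOpen_iff.1 h1 v1 hv1
  obtain ⟨ε2, hε2, hb2⟩ := Metric.isOpen_iff.1 h2 v2 hv2
  obtain ⟨ε1', hε1', hb1'⟩ := Metric.isOpen_iff.1 h1' v1' hv1'
  obtain ⟨ε2', hε2', hb2'⟩ := Metric.isOpen_iff.1 h2' v2' hv2'
  set ε := min (min ε1 ε2) (min ε1' ε2') with hεdef
  have hε : 0 < ε := by
    simp only [hεdef, lt_min_iff]
    exact ⟨⟨hε1, hε2⟩, ⟨hε1', hε2'⟩⟩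
  set g : F × F := (v1, v2) with hgdef
  set h : F × F := (v1', v2') with hhdef
  intro L
  set M := max 1 ‖R‖ with hMdef
  have hM : 1 ≤ M := le_max_left _ _
  have hM0 : 0 < M := lt_of_lt_of_le one_pos hM
  have hc0 : (0:ℝ) < M ^ L := pow_pos hM0 L
  -- w with ‖R^L w - h‖ < ε/4
  obtain ⟨w, hw⟩ : ∃ w, ‖(R ^ L) w - h‖ < ε / 4 := by
    have hdr := dense_orbit_denseRange_pow hdR L
    have hcl := hdr h
    rw [Metric.mem_closure_iff] at hcl
    obtain ⟨_, ⟨w, rfl⟩, hw⟩ := hcl (ε / 4) (by positivity)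
    exact ⟨w, by rwa [dist_comm, dist_eq_norm] at hw⟩
  set η := ε / (8 * M ^ L) with hηdef
  have hη : 0 < η := by positivity
  obtain ⟨n, hnA, hnB⟩ := pairR (ball g (ε / 2)) (ball (0 : F × F) η) (ball (0 : F × F) η)
    (ball w η) isOpen_ball ⟨g, mem_ball_self (by positivity)⟩ isOpen_ball
    ⟨0, mem_ball_self hη⟩ isOpen_ball ⟨0, mem_ball_self hη⟩ isOpen_ball
    ⟨w, mem_ball_self hη⟩
  refine ⟨n, fun j hj => ?_⟩
  -- membership in ball-level R hitting set
  have hball : n + j ∈ hittingTimes R (ball g ε) (ball h ε) := by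
    obtain ⟨x', hx', hx2'⟩ := mem_hittingTimes_iff.1 hnA
    obtain ⟨y', hy', hy2'⟩ := mem_hittingTimes_iff.1 hnB
    rw [mem_ball, dist_eq_norm] at hx' hx2' hy' hy2'
    rw [sub_zero] at hx2' hy'
    refine mem_hittingTimes_iff.2 ⟨x' + (R ^ (L - j)) y', ?_, ?_⟩
    · rw [mem_ball, dist_eq_norm]
      have hstep : ‖(R ^ (L - j)) y'‖ ≤ M ^ L * η := by
        calc ‖(R ^ (L - j)) y'‖ ≤ M ^ (L - j) * ‖y'‖ := pow_apply_norm_le R _ _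
          _ ≤ M ^ L * ‖y'‖ :=
              mul_le_mul_of_nonneg_right (pow_le_pow_right₀ hM (by omega)) (norm_nonneg _)
          _ ≤ M ^ L * η := mul_le_mul_of_nonneg_left (le_of_lt hy') (le_of_lt hc0)
      have hMη : M ^ L * η = ε / 8 := by rw [hηdef]; field_simp
      calc ‖x' + (R ^ (L - j)) y' - g‖ = ‖(x' - g) + (R ^ (L - j)) y'‖ := by
            rw [add_sub_right_comm]
        _ ≤ ‖x' - g‖ + ‖(R ^ (L - j)) y'‖ := norm_add_le _ _
        _ < ε / 2 + ε / 8 := by rw [hMη] at hstep; linarith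
        _ < ε := by linarith
    · rw [mem_ball, dist_eq_norm, map_add]
      have e1 : n + j + (L - j) = L + n := by omega
      have hrw : (R ^ (n + j)) ((R ^ (L - j)) y') = (R ^ L) ((R ^ n) y') := by
        rw [← pow_add_apply, e1, pow_add_apply]
      rw [hrw]
      have t1 : ‖(R ^ (n + j)) x'‖ ≤ ε / 8 := by
        have hMη : M ^ L * (ε / (8 * M ^ L)) = ε / 8 := by field_simp
        calc ‖(R ^ (n + j)) x'‖ = ‖(R ^ j) ((R ^ n) x')‖ := by
              rw [← pow_add_apply, add_comm n j]
          _ ≤ M ^ j * ‖(R ^ n) x'‖ := pow_apply_norm_le R _ _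
          _ ≤ M ^ L * ‖(R ^ n) x'‖ :=
              mul_le_mul_of_nonneg_right (pow_le_pow_right₀ hM hj) (norm_nonneg _)
          _ ≤ M ^ L * (ε / (8 * M ^ L)) :=
              mul_le_mul_of_nonneg_left (le_of_lt hx2') (le_of_lt hc0)
          _ = ε / 8 := hMη
      have t2 : ‖(R ^ L) ((R ^ n) y') - h‖ ≤ ε / 8 + ε / 4 := by
        have hsplit : (R ^ L) ((R ^ n) y') - h
            = (R ^ L) ((R ^ n) y' - w) + ((R ^ L) w - h) := by rw [map_sub]; abel
        have hMη : M ^ L * η = ε / 8 := by rw [hηdef]; field_simp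
        rw [hsplit]
        calc ‖(R ^ L) ((R ^ n) y' - w) + ((R ^ L) w - h)‖
            ≤ ‖(R ^ L) ((R ^ n) y' - w)‖ + ‖(R ^ L) w - h‖ := norm_add_le _ _
          _ ≤ M ^ L * η + ε / 4 := by
              refine add_le_add ?_ (le_of_lt hw)
              calc ‖(R ^ L) ((R ^ n) y' - w)‖ ≤ M ^ L * ‖(R ^ n) y' - w‖ :=
                    pow_apply_norm_le R _ _
                _ ≤ M ^ L * η := mul_le_mul_of_nonneg_left (le_of_lt hy2') (le_of_lt hc0)
          _ = ε / 8 + ε / 4 := by rw [hMη]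
      calc ‖(R ^ (n + j)) x' + (R ^ L) ((R ^ n) y') - h‖
          = ‖(R ^ (n + j)) x' + ((R ^ L) ((R ^ n) y') - h)‖ := by rw [add_sub_assoc]
        _ ≤ ‖(R ^ (n + j)) x'‖ + ‖(R ^ L) ((R ^ n) y') - h‖ := norm_add_le _ _
        _ ≤ ε / 8 + (ε / 8 + ε / 4) := add_le_add t1 t2
        _ < ε := by linarith
  -- transfer down to S
  have hεle1 : ε ≤ ε1 := le_trans (min_le_left _ _) (min_le_left _ _)
  have hεle2 : ε ≤ ε2 := le_trans (min_le_left _ _) (min_le_right _ _)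
  have hεle1' : ε ≤ ε1' := le_trans (min_le_right _ _) (min_le_left _ _)
  have hεle2' : ε ≤ ε2' := le_trans (min_le_right _ _) (min_le_right _ _)
  have hgb : ball g ε ⊆ V1 ×ˢ V2 := by
    rw [hgdef, ← ball_prod_same]
    exact Set.prod_mono ((ball_subset_ball hεle1).trans hb1)
      ((ball_subset_ball hεle2).trans hb2)
  have hhb : ball h ε ⊆ V1' ×ˢ V2' := by
    rw [hhdef, ← ball_prod_same]
    exact Set.prod_mono ((ball_subset_ball hεle1').trans hb1')
      ((ball_subset_ball hεle2').trans hb2')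
  have hfin := hittingTimes_mono hgb hhb hball
  rw [hRdef, hittingTimes_prod] at hfin
  exact hfin

end Part3
section Part4

open Set Metric TopologicalSpace

variable {E : Type*} [NormedAddCommGroup E] [NormedSpace ℂ E]
variable {F : Type*} [NormedAddCommGroup F] [NormedSpace ℂ F]

lemma wm_hypercyclic {T : E →L[ℂ] E} (h : WeaklyMixing T) : Hypercyclic T := by
  obtain ⟨x, y, hd⟩ := h
  refine ⟨x, ?_⟩
  have hsurj : DenseRange (Prod.fst : E × E → E) :=
    Function.Surjective.denseRange Prod.fst_surjective
  exact hsurj.comp hd continuous_fst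

theorem dir12 [CompleteSpace E] [SeparableSpace E] {T : E →L[ℂ] E}
    (hT : SyndeticallyTransitive T) [CompleteSpace F] [SeparableSpace F] {S : F →L[ℂ] F}
    (hS : WeaklyMixing S) : WeaklyMixing (T.prodMap S) := by
  set P := T.prodMap S with hPdef
  set Q := P.prodMap P with hQdef
  have transQ : ∀ G H : Set ((E × F) × (E × F)), IsOpen G → G.Nonempty → IsOpen H →
      H.Nonempty → (hittingTimes Q G H).Nonempty := by
    intro G H hG hGn hH hHn
    obtain ⟨p, hp⟩ := hGn
    obtain ⟨A, B, hA, hB, hpA, hpB, hABsub⟩ := isOpen_prod_iff.1 hG p.1 p.2 (by simpa)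
    obtain ⟨U1, V1, hU1, hV1, hp11, hp12, hUV1⟩ := isOpen_prod_iff.1 hA p.1.1 p.1.2
      (by simpa using hpA)
    obtain ⟨U2, V2, hU2, hV2, hp21, hp22, hUV2⟩ := isOpen_prod_iff.1 hB p.2.1 p.2.2
      (by simpa using hpB)
    obtain ⟨q, hq⟩ := hHn
    obtain ⟨A', B', hA', hB', hqA, hqB, hABsub'⟩ := isOpen_prod_iff.1 hH q.1 q.2 (by simpa)
    obtain ⟨U1', V1', hU1', hV1', hq11, hq12, hUV1'⟩ := isOpen_prod_iff.1 hA' q.1.1 q.1.2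
      (by simpa using hqA)
    obtain ⟨U2', V2', hU2', hV2', hq21, hq22, hUV2'⟩ := isOpen_prod_iff.1 hB' q.2.1 q.2.2
      (by simpa using hqB)
    have hsyn : Syndetic (hittingTimes T U1 U1' ∩ hittingTimes T U2 U2') :=
      ((synTrans_thickSyn hT hU1 ⟨_, hp11⟩ hU1' ⟨_, hq11⟩).inter
        (synTrans_thickSyn hT hU2 ⟨_, hp21⟩ hU2' ⟨_, hq21⟩)).syndetic
    have hthick : Thick (hittingTimes S V1 V1' ∩ hittingTimes S V2 V2') :=
      wm_thick hS hV1 ⟨_, hp12⟩ hV1' ⟨_, hq12⟩ hV2 ⟨_, hp22⟩ hV2' ⟨_, hq22⟩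
    obtain ⟨n, hnT, hnS⟩ := hsyn.inter_thick hthick
    have hn : n ∈ hittingTimes Q ((U1 ×ˢ V1) ×ˢ (U2 ×ˢ V2))
        ((U1' ×ˢ V1') ×ˢ (U2' ×ˢ V2')) := by
      rw [hQdef, hittingTimes_prod, hPdef, hittingTimes_prod, hittingTimes_prod]
      exact ⟨⟨hnT.1, hnS.1⟩, ⟨hnT.2, hnS.2⟩⟩
    refine ⟨n, hittingTimes_mono ?_ ?_ hn⟩
    · exact (Set.prod_mono hUV1 hUV2).trans hABsub
    · exact (Set.prod_mono hUV1' hUV2').trans hABsub'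
  obtain ⟨z, hz⟩ := trans_dense_orbit transQ
  refine ⟨z.1, z.2, ?_⟩
  have : (fun n : ℕ => (Q ^ n) z) = fun n : ℕ => ((P ^ n) z.1, (P ^ n) z.2) :=
    funext fun n => prodMap_pow_apply P P n z.1 z.2
  rw [this] at hz
  exact hz

end Part4
section Gaps

lemma not_syndetic_gap {A : Set ℕ} (hA : ¬ Syndetic A) (b P : ℕ) :
    ∃ n, P ≤ n ∧ ∀ m, n ≤ m → m ≤ n + b → m ∉ A := by
  rw [Syndetic] at hA
  push_neg at hA
  obtain ⟨n0, hn0⟩ := hA (b + P + 1) (by omega)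
  refine ⟨max n0 P, le_max_right _ _, fun m h1 h2 hm => ?_⟩
  have := hn0 m hm
  omega

noncomputable def gapSeq (A : Set ℕ) (hA : ¬ Syndetic A) : ℕ → ℕ
  | 0 => 0
  | (k+1) => (not_syndetic_gap hA (2*(k+1)) (gapSeq A hA k + 2*k + 1)).choose

lemma gapSeq_spec (A : Set ℕ) (hA : ¬ Syndetic A) (k : ℕ) :
    gapSeq A hA k + 2*k + 1 ≤ gapSeq A hA (k+1) ∧
    ∀ m, gapSeq A hA (k+1) ≤ m → m ≤ gapSeq A hA (k+1) + 2*(k+1) → m ∉ A := by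
  have h := (not_syndetic_gap hA (2*(k+1)) (gapSeq A hA k + 2*k + 1)).choose_spec
  exact ⟨h.1, h.2⟩

lemma gapSeq_ge (A : Set ℕ) (hA : ¬ Syndetic A) : ∀ k, k ≤ gapSeq A hA k := by
  intro k
  induction k with
  | zero => omega
  | succ k ih => have := (gapSeq_spec A hA k).1; omega

def tentF (a : ℕ → ℕ) (k n : ℕ) : ℕ := min (n - a (k+1)) (a (k+1) + 2*(k+1) - n)

def heightF (a : ℕ → ℕ) (n : ℕ) : ℕ := Finset.sup (Finset.range n) (fun k => tentF a k n)

lemma le_heightF {a : ℕ → ℕ} {k n : ℕ} (h : k < n) : tentF a k n ≤ heightF a n :=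
  Finset.le_sup (f := fun k => tentF a k n) (Finset.mem_range.2 h)

lemma heightF_zero (a : ℕ → ℕ) : heightF a 0 = 0 := rfl

lemma tentF_eq_zero {a : ℕ → ℕ} {k n : ℕ} (h : n ≤ a (k+1)) : tentF a k n = 0 := by
  unfold tentF; omega

/-- Lipschitz property of the height function. -/
lemma heightF_lip {a : ℕ → ℕ} (ha : ∀ k, k + 1 ≤ a (k+1)) (n : ℕ) :
    heightF a (n+1) ≤ heightF a n + 1 ∧ heightF a n ≤ heightF a (n+1) + 1 := by
  constructor
  · refine Finset.sup_le fun k hk => ?_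
    rcases Nat.lt_or_ge k n with hkn | hkn
    · have h1 : tentF a k (n+1) ≤ tentF a k n + 1 := by unfold tentF; omega
      have h2 : tentF a k n ≤ heightF a n := le_heightF hkn
      omega
    · have hk' : k = n := by simp only [Finset.mem_range] at hk; omega
      subst hk'
      have : tentF a k (k+1) = 0 := tentF_eq_zero (ha k)
      omega
  · refine Finset.sup_le fun k hk => ?_
    have h1 : tentF a k n ≤ tentF a k (n+1) + 1 := by unfold tentF; omega
    have h2 : tentF a k (n+1) ≤ heightF a (n+1) := by
      refine le_heightF ?_
      simp only [Finset.mem_range] at hk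
      omega
    omega

/-- Positive height means we are inside a gap interval. -/
lemma heightF_pos_gap {A : Set ℕ} (hA : ¬ Syndetic A) {n : ℕ}
    (h : heightF (gapSeq A hA) n ≠ 0) : n ∉ A := by
  set a := gapSeq A hA with hadef
  have : ∃ k ∈ Finset.range n, tentF a k n ≠ 0 := by
    by_contra hc
    push_neg at hc
    refine h (Nat.le_zero.1 ?_)
    unfold heightF
    exact Finset.sup_le fun k hk => Nat.le_zero.2 (hc k hk)
  obtain ⟨k, _, hk⟩ := this
  have h1 : a (k+1) ≤ n ∧ n ≤ a (k+1) + 2*(k+1) := by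
    unfold tentF at hk; omega
  exact (gapSeq_spec A hA k).2 n h1.1 h1.2

/-- Plateau: arbitrarily high plateaus of arbitrary length, arbitrarily far out. -/
lemma heightF_plateau {A : Set ℕ} (hA : ¬ Syndetic A) (N K : ℕ) :
    ∃ n, N ≤ n ∧ ∀ j, j ≤ N → K ≤ heightF (gapSeq A hA) (n + j) := by
  have ha : ∀ k, k + 1 ≤ gapSeq A hA (k+1) := fun k => gapSeq_ge A hA (k+1)
  obtain ⟨k, hk1, hk2⟩ : ∃ k : ℕ, N ≤ k ∧ K + N ≤ k :=
    ⟨max N (K + N), le_max_left _ _, le_max_right _ _⟩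
  have hak := ha k
  refine ⟨gapSeq A hA (k+1) + K, by omega, fun j hj => ?_⟩
  have htent : K ≤ tentF (gapSeq A hA) k (gapSeq A hA (k+1) + K + j) := by
    unfold tentF
    omega
  refine le_trans htent ?_
  have : gapSeq A hA (k+1) + K + j = (gapSeq A hA (k+1) + K) + j := rfl
  exact le_heightF (by omega)

end Gaps
section ShiftOp

open Set Metric TopologicalSpace

lemma Y0_norm_eq (f : lp (fun _ : ℕ => ℂ) 1) : ‖f‖ = ∑' i, ‖f i‖ := by
  have h := lp.norm_eq_tsum_rpow (p := 1) (by norm_num) f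
  simpa using h

lemma Y0_summable (f : lp (fun _ : ℕ => ℂ) 1) : Summable fun i => ‖f i‖ := by
  have h := (lp.memℓp f).summable (p := 1) (by norm_num)
  simpa using h

lemma Y0_memℓp {f : ∀ _ : ℕ, ℂ} (h : Summable fun i => ‖f i‖) : Memℓp f 1 := by
  refine memℓp_gen ?_
  simpa using h

lemma single_coord (j i : ℕ) (a : ℂ) :
    (↑(lp.single (E := fun _ : ℕ => ℂ) 1 i a) : ∀ _ : ℕ, ℂ) j = if j = i then a else 0 := by
  by_cases h : j = i
  · subst h
    simp [lp.single_apply_self]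
  · simp [lp.single_apply_ne _ _ _ h, h]

lemma coord_sum_single (N : ℕ) (c : ℕ → ℂ) (j : ℕ) :
    (↑(∑ i ∈ Finset.range N, lp.single (E := fun _ : ℕ => ℂ) 1 i (c i)) : ∀ _ : ℕ, ℂ) j
      = if j < N then c j else 0 := by
  rw [lp.coeFn_sum, Finset.sum_apply]
  rw [Finset.sum_congr rfl (fun i _ => single_coord j i (c i))]
  rw [Finset.sum_ite_eq (Finset.range N) j c]
  simp [Finset.mem_range]

lemma coord_sum_single_shift (N n : ℕ) (d : ℕ → ℂ) (i : ℕ) :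
    (↑(∑ i' ∈ Finset.range N, lp.single (E := fun _ : ℕ => ℂ) 1 (n + i') (d i')) : ∀ _ : ℕ, ℂ)
      (n + i) = if i < N then d i else 0 := by
  rw [lp.coeFn_sum, Finset.sum_apply]
  have h1 : ∀ i' ∈ Finset.range N,
      (↑(lp.single (E := fun _ : ℕ => ℂ) 1 (n + i') (d i')) : ∀ _ : ℕ, ℂ) (n + i)
        = if i = i' then d i' else 0 := by
    intro i' _
    rw [single_coord]
    simp only [add_right_inj]
  rw [Finset.sum_congr rfl h1, Finset.sum_ite_eq (Finset.range N) i d]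
  simp [Finset.mem_range]

lemma coord_sum_single_shift_low (N n : ℕ) (d : ℕ → ℂ) (j : ℕ) (hj : j < n) :
    (↑(∑ i' ∈ Finset.range N, lp.single (E := fun _ : ℕ => ℂ) 1 (n + i') (d i')) : ∀ _ : ℕ, ℂ)
      j = 0 := by
  rw [lp.coeFn_sum, Finset.sum_apply]
  refine Finset.sum_eq_zero fun i' _ => ?_
  rw [single_coord]
  have : ¬ (j = n + i') := by omega
  simp [this]

lemma single_add' (i : ℕ) (a b : ℂ) :
    lp.single (E := fun _ : ℕ => ℂ) 1 i (a + b) =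
      lp.single 1 i a + lp.single 1 i b := by
  refine lp.ext (funext fun j => ?_)
  rw [lp.coeFn_add, Pi.add_apply, single_coord, single_coord, single_coord]
  by_cases h : j = i <;> simp [h]

noncomputable def truncMap (N : ℕ) : (Fin N → ℂ) →ₗ[ℂ] lp (fun _ : ℕ => ℂ) 1 where
  toFun c := ∑ i : Fin N, lp.single 1 (i : ℕ) (c i)
  map_add' c d := by
    rw [← Finset.sum_add_distrib]
    exact Finset.sum_congr rfl fun i _ => single_add' (i : ℕ) (c i) (d i)
  map_smul' m c := by
    simp only [RingHom.id_apply, Finset.smul_sum]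
    exact Finset.sum_congr rfl fun i _ => by rw [Pi.smul_apply, lp.single_smul]

instance Y0_separable : SeparableSpace (lp (fun _ : ℕ => ℂ) 1) := by
  have hsep : IsSeparable (⋃ N : ℕ, Set.range (truncMap N)) :=
    IsSeparable.iUnion fun N =>
      isSeparable_range (truncMap N).continuous_of_finiteDimensional
  have hdense : Dense (⋃ N : ℕ, Set.range (truncMap N)) := by
    intro f
    refine mem_closure_of_tendsto
      ((lp.hasSum_single (E := fun _ : ℕ => ℂ) (p := 1) (by norm_num) f).tendsto_sum_nat) ?_
    refine Filter.Eventually.of_forall fun N => ?_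
    refine Set.mem_iUnion.2 ⟨N, ⟨fun i => f (i : ℕ), ?_⟩⟩
    show ∑ i : Fin N, lp.single 1 (i : ℕ) (f (i : ℕ))
      = ∑ i ∈ Finset.range N, lp.single 1 i (f i)
    exact (Finset.sum_range fun i => lp.single 1 i (f i)).symm
  obtain ⟨c, hc, hsub⟩ := hsep
  refine ⟨⟨c, hc, fun x => ?_⟩⟩
  have h1 := hdense x
  have h2 := closure_mono hsub h1
  rwa [closure_closure] at h2

noncomputable def shiftCoef (g : ℕ → ℕ) (i : ℕ) : ℂ := (2:ℂ) ^ (g (i+1)) / (2:ℂ) ^ (g i)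

lemma norm_two_pow (k : ℕ) : ‖(2:ℂ) ^ k‖ = 2 ^ k := by
  rw [norm_pow]
  norm_num

lemma norm_shiftCoef_le (g : ℕ → ℕ) (hg : ∀ n, g (n+1) ≤ g n + 1) (i : ℕ) :
    ‖shiftCoef g i‖ ≤ 2 := by
  unfold shiftCoef
  rw [norm_div, norm_two_pow, norm_two_pow]
  rw [div_le_iff₀ (by positivity)]
  calc (2:ℝ) ^ g (i+1) ≤ 2 ^ (g i + 1) := pow_le_pow_right₀ one_le_two (hg i)
    _ = 2 * 2 ^ g i := by rw [pow_succ]; ring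

lemma shift_summable (g : ℕ → ℕ) (hg : ∀ n, g (n+1) ≤ g n + 1)
    (f : lp (fun _ : ℕ => ℂ) 1) :
    Summable fun i : ℕ => ‖shiftCoef g i * f (i+1)‖ := by
  have hs : Summable fun i : ℕ => ‖f (i+1)‖ :=
    (Y0_summable f).comp_injective (add_left_injective 1)
  refine Summable.of_nonneg_of_le (fun i => norm_nonneg _) (fun i => ?_) (hs.mul_left 2)
  rw [norm_mul]
  exact mul_le_mul_of_nonneg_right (norm_shiftCoef_le g hg i) (norm_nonneg _)

lemma shift_memℓp (g : ℕ → ℕ) (hg : ∀ n, g (n+1) ≤ g n + 1) (f : lp (fun _ : ℕ => ℂ) 1) :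
    Memℓp (fun i => shiftCoef g i * f (i+1)) 1 :=
  Y0_memℓp (shift_summable g hg f)

noncomputable def shiftOp (g : ℕ → ℕ) (hg : ∀ n, g (n+1) ≤ g n + 1) :
    lp (fun _ : ℕ => ℂ) 1 →L[ℂ] lp (fun _ : ℕ => ℂ) 1 :=
  LinearMap.mkContinuous
    { toFun := fun f => ⟨fun i => shiftCoef g i * f (i+1), shift_memℓp g hg f⟩
      map_add' := fun f1 f2 => by
        refine lp.ext (funext fun i => ?_)
        show shiftCoef g i * (↑(f1 + f2) : ∀ _ : ℕ, ℂ) (i+1) = _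
        rw [lp.coeFn_add, Pi.add_apply]
        have : (↑((⟨fun i => shiftCoef g i * f1 (i+1), shift_memℓp g hg f1⟩ : lp (fun _ : ℕ => ℂ) 1)
            + (⟨fun i => shiftCoef g i * f2 (i+1), shift_memℓp g hg f2⟩ : lp (fun _ : ℕ => ℂ) 1))
            : ∀ _ : ℕ, ℂ) i
            = shiftCoef g i * f1 (i+1) + shiftCoef g i * f2 (i+1) := by
          rw [lp.coeFn_add]; rfl
        rw [this, mul_add]
      map_smul' := fun m f => by
        refine lp.ext (funext fun i => ?_)
        have lhs : (↑(m • f) : ∀ _ : ℕ, ℂ) (i+1) = m * f (i+1) := by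
          rw [lp.coeFn_smul, Pi.smul_apply, smul_eq_mul]
        show shiftCoef g i * (↑(m • f) : ∀ _ : ℕ, ℂ) (i+1)
          = (↑(m • (⟨fun i => shiftCoef g i * f (i+1), shift_memℓp g hg f⟩ :
              lp (fun _ : ℕ => ℂ) 1)) : ∀ _ : ℕ, ℂ) i
        rw [lhs, lp.coeFn_smul, Pi.smul_apply, smul_eq_mul]
        show shiftCoef g i * (m * f (i+1)) = m * (shiftCoef g i * f (i+1))
        ring }
    2
    (fun f => by
      refine lp.norm_le_of_tsum_le (by norm_num) (by positivity) ?_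
      have h1 : ∑' i : ℕ, ‖shiftCoef g i * f (i+1)‖ ≤ 2 * ‖f‖ := by
        have hs : Summable fun i : ℕ => ‖f (i+1)‖ :=
          (Y0_summable f).comp_injective (add_left_injective 1)
        calc ∑' i : ℕ, ‖shiftCoef g i * f (i+1)‖
            ≤ ∑' i : ℕ, 2 * ‖f (i+1)‖ := by
              refine Summable.tsum_le_tsum (fun i => ?_) (shift_summable g hg f) (hs.mul_left 2)
              rw [norm_mul]
              exact mul_le_mul_of_nonneg_right (norm_shiftCoef_le g hg i) (norm_nonneg _)
          _ = 2 * ∑' i : ℕ, ‖f (i+1)‖ := tsum_mul_left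
          _ ≤ 2 * ∑' i : ℕ, ‖f i‖ := by
              refine mul_le_mul_of_nonneg_left ?_ (by norm_num)
              refine Summable.tsum_le_tsum_of_inj (fun i => i + 1) (add_left_injective 1)
                (fun c _ => norm_nonneg _) (fun i => le_refl _) hs (Y0_summable f)
          _ = 2 * ‖f‖ := by rw [Y0_norm_eq]
      simpa using h1)

lemma shiftOp_apply (g : ℕ → ℕ) (hg : ∀ n, g (n+1) ≤ g n + 1) (f : lp (fun _ : ℕ => ℂ) 1)
    (i : ℕ) : (shiftOp g hg f) i = shiftCoef g i * f (i+1) := rfl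

lemma shiftOp_pow_apply (g : ℕ → ℕ) (hg : ∀ n, g (n+1) ≤ g n + 1) (n : ℕ)
    (f : lp (fun _ : ℕ => ℂ) 1) (i : ℕ) :
    ((shiftOp g hg ^ n) f) i = ((2:ℂ) ^ g (n+i) / (2:ℂ) ^ g i) * f (n+i) := by
  induction n generalizing f with
  | zero =>
      rw [pow_zero, ContinuousLinearMap.one_apply]
      simp only [Nat.zero_add]
      rw [div_self (pow_ne_zero _ two_ne_zero), one_mul]
  | succ n ih =>
      have h1 : ((shiftOp g hg ^ (n+1)) f) = (shiftOp g hg ^ n) (shiftOp g hg f) := by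
        rw [pow_succ, ContinuousLinearMap.mul_apply]
      rw [h1, ih (shiftOp g hg f), shiftOp_apply]
      unfold shiftCoef
      have h2 : (2:ℂ) ^ g (n+i) ≠ 0 := pow_ne_zero _ two_ne_zero
      have h3 : (2:ℂ) ^ g i ≠ 0 := pow_ne_zero _ two_ne_zero
      rw [show n + 1 + i = n + i + 1 from by omega]
      field_simp

end ShiftOp
section ShiftWM

open Set Metric TopologicalSpace

lemma shift_approx (g : ℕ → ℕ) (hg : ∀ n, g (n+1) ≤ g n + 1)
    (u v : lp (fun _ : ℕ => ℂ) 1) (ε : ℝ) (hε : 0 < ε) :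
    ∃ N K : ℕ, ∀ n, N ≤ n → (∀ j, j ≤ N → K ≤ g (n + j)) →
      ∃ x : lp (fun _ : ℕ => ℂ) 1,
        ‖x - u‖ < ε ∧ ‖(shiftOp g hg ^ n) x - v‖ < ε := by
  obtain ⟨N1, hN1⟩ := Metric.tendsto_atTop.1
    ((lp.hasSum_single (E := fun _ : ℕ => ℂ) (p := 1) (by norm_num) u).tendsto_sum_nat)
    (ε/2) (by positivity)
  obtain ⟨N2, hN2⟩ := Metric.tendsto_atTop.1
    ((lp.hasSum_single (E := fun _ : ℕ => ℂ) (p := 1) (by norm_num) v).tendsto_sum_nat)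
    (ε/2) (by positivity)
  set N := max N1 N2 with hNdef
  have hCtot0 : (0:ℝ) ≤ ∑ i ∈ Finset.range N, (2:ℝ) ^ g i * ‖v i‖ :=
    Finset.sum_nonneg fun i _ => by positivity
  obtain ⟨K, hK⟩ := pow_unbounded_of_one_lt
    (R := ℝ) ((∑ i ∈ Finset.range N, (2:ℝ) ^ g i * ‖v i‖) / (ε/2)) one_lt_two
  refine ⟨N, K, fun n hn hplat => ?_⟩
  have hPu : ‖(∑ i ∈ Finset.range N, lp.single (E := fun _ : ℕ => ℂ) 1 i (u i)) - u‖
      < ε/2 := by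
    have := hN1 N (le_max_left _ _)
    rwa [dist_eq_norm] at this
  have hPv : ‖(∑ i ∈ Finset.range N, lp.single (E := fun _ : ℕ => ℂ) 1 i (v i)) - v‖
      < ε/2 := by
    have := hN2 N (le_max_right _ _)
    rwa [dist_eq_norm] at this
  set d : ℕ → ℂ := fun i => ((2:ℂ) ^ g i / (2:ℂ) ^ g (n+i)) * v i with hd
  refine ⟨(∑ i ∈ Finset.range N, lp.single (E := fun _ : ℕ => ℂ) 1 i (u i))
    + (∑ i ∈ Finset.range N, lp.single (E := fun _ : ℕ => ℂ) 1 (n + i) (d i)), ?_, ?_⟩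
  · -- close to u
    have hcvec : ‖∑ i ∈ Finset.range N, lp.single (E := fun _ : ℕ => ℂ) 1 (n + i) (d i)‖
        < ε/2 := by
      have hb : ∀ i ∈ Finset.range N,
          ‖lp.single (E := fun _ : ℕ => ℂ) 1 (n + i) (d i)‖
            ≤ (2:ℝ) ^ g i * ‖v i‖ / 2 ^ K := by
        intro i hi
        have hsingle : ‖lp.single (E := fun _ : ℕ => ℂ) 1 (n + i) (d i)‖ = ‖d i‖ :=
          lp.norm_single (E := fun _ : ℕ => ℂ) (p := 1) one_pos (n + i) (d i)
        have hdn : ‖d i‖ = (2:ℝ) ^ g i / (2:ℝ) ^ g (n+i) * ‖v i‖ := by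
          rw [hd]
          simp only []
          rw [norm_mul, norm_div, norm_two_pow, norm_two_pow]
        have hKle : (2:ℝ) ^ K ≤ 2 ^ g (n + i) := by
          refine pow_le_pow_right₀ one_le_two ?_
          exact hplat i (Finset.mem_range.1 hi).le
        rw [hsingle, hdn]
        have h1 : (2:ℝ) ^ g i / (2:ℝ) ^ g (n+i) ≤ (2:ℝ) ^ g i / (2:ℝ) ^ K :=
          div_le_div_of_nonneg_left (by positivity) (by positivity) hKle
        calc (2:ℝ) ^ g i / (2:ℝ) ^ g (n+i) * ‖v i‖
            ≤ (2:ℝ) ^ g i / (2:ℝ) ^ K * ‖v i‖ :=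
              mul_le_mul_of_nonneg_right h1 (norm_nonneg _)
          _ = (2:ℝ) ^ g i * ‖v i‖ / 2 ^ K := by ring
      have h2 : (∑ i ∈ Finset.range N, (2:ℝ) ^ g i * ‖v i‖ / 2 ^ K)
          = (∑ i ∈ Finset.range N, (2:ℝ) ^ g i * ‖v i‖) / 2 ^ K :=
        (Finset.sum_div _ _ _).symm
      have h3 : (∑ i ∈ Finset.range N, (2:ℝ) ^ g i * ‖v i‖) / 2 ^ K < ε / 2 := by
        rw [div_lt_iff₀ (by positivity)] at hK ⊢
        nlinarith [pow_pos (show (0:ℝ) < 2 by norm_num) K]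
      calc ‖∑ i ∈ Finset.range N, lp.single (E := fun _ : ℕ => ℂ) 1 (n + i) (d i)‖
          ≤ ∑ i ∈ Finset.range N, ‖lp.single (E := fun _ : ℕ => ℂ) 1 (n + i) (d i)‖ :=
            norm_sum_le _ _
        _ ≤ ∑ i ∈ Finset.range N, (2:ℝ) ^ g i * ‖v i‖ / 2 ^ K := Finset.sum_le_sum hb
        _ < ε / 2 := by rw [h2]; exact h3
    calc ‖(∑ i ∈ Finset.range N, lp.single (E := fun _ : ℕ => ℂ) 1 i (u i))
          + (∑ i ∈ Finset.range N, lp.single (E := fun _ : ℕ => ℂ) 1 (n + i) (d i)) - u‖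
        = ‖((∑ i ∈ Finset.range N, lp.single (E := fun _ : ℕ => ℂ) 1 i (u i)) - u)
          + (∑ i ∈ Finset.range N, lp.single (E := fun _ : ℕ => ℂ) 1 (n + i) (d i))‖ := by
          rw [add_sub_right_comm]
      _ ≤ ‖(∑ i ∈ Finset.range N, lp.single (E := fun _ : ℕ => ℂ) 1 i (u i)) - u‖
          + ‖∑ i ∈ Finset.range N, lp.single (E := fun _ : ℕ => ℂ) 1 (n + i) (d i)‖ :=
          norm_add_le _ _
      _ < ε/2 + ε/2 := add_lt_add hPu hcvec
      _ = ε := by ring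
  · -- exact image
    have hSx : (shiftOp g hg ^ n)
        ((∑ i ∈ Finset.range N, lp.single (E := fun _ : ℕ => ℂ) 1 i (u i))
          + (∑ i ∈ Finset.range N, lp.single (E := fun _ : ℕ => ℂ) 1 (n + i) (d i)))
        = ∑ i ∈ Finset.range N, lp.single (E := fun _ : ℕ => ℂ) 1 i (v i) := by
      refine lp.ext (funext fun i => ?_)
      rw [shiftOp_pow_apply]
      have hc1 : (↑((∑ i ∈ Finset.range N, lp.single (E := fun _ : ℕ => ℂ) 1 i (u i))
          + (∑ i ∈ Finset.range N, lp.single (E := fun _ : ℕ => ℂ) 1 (n + i) (d i)))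
          : ∀ _ : ℕ, ℂ) (n + i) = if i < N then d i else 0 := by
        rw [lp.coeFn_add, Pi.add_apply, coord_sum_single, coord_sum_single_shift]
        have : ¬ (n + i < N) := by omega
        simp [this]
      rw [hc1, coord_sum_single]
      by_cases hiN : i < N
      · simp only [hiN, if_true]
        rw [hd]
        simp only []
        have h2 : (2:ℂ) ^ g (n+i) ≠ 0 := pow_ne_zero _ two_ne_zero
        have h3 : (2:ℂ) ^ g i ≠ 0 := pow_ne_zero _ two_ne_zero
        field_simp
      · simp only [hiN, if_false]
        rw [mul_zero]
    rw [hSx]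
    linarith [hPv]

lemma shiftOp_wm (g : ℕ → ℕ) (hg : ∀ n, g (n+1) ≤ g n + 1)
    (hplateau : ∀ N K : ℕ, ∃ n, N ≤ n ∧ ∀ j, j ≤ N → K ≤ g (n + j)) :
    WeaklyMixing (shiftOp g hg) := by
  have transQ : ∀ G H : Set (lp (fun _ : ℕ => ℂ) 1 × lp (fun _ : ℕ => ℂ) 1),
      IsOpen G → G.Nonempty → IsOpen H → H.Nonempty →
      (hittingTimes ((shiftOp g hg).prodMap (shiftOp g hg)) G H).Nonempty := by
    intro G H hG hGn hH hHn
    obtain ⟨p, hp⟩ := hGn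
    obtain ⟨W1, W2, hW1, hW2, hp1, hp2, hWsub⟩ := isOpen_prod_iff.1 hG p.1 p.2 (by simpa)
    obtain ⟨q, hq⟩ := hHn
    obtain ⟨W1', W2', hW1', hW2', hq1, hq2, hWsub'⟩ := isOpen_prod_iff.1 hH q.1 q.2 (by simpa)
    obtain ⟨e1, he1, hb1⟩ := Metric.isOpen_iff.1 hW1 p.1 hp1
    obtain ⟨e2, he2, hb2⟩ := Metric.isOpen_iff.1 hW2 p.2 hp2
    obtain ⟨e1', he1', hb1'⟩ := Metric.isOpen_iff.1 hW1' q.1 hq1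
    obtain ⟨e2', he2', hb2'⟩ := Metric.isOpen_iff.1 hW2' q.2 hq2
    set ε := min (min e1 e2) (min e1' e2') with hεdef
    have hε : 0 < ε := by
      simp only [hεdef, lt_min_iff]
      exact ⟨⟨he1, he2⟩, ⟨he1', he2'⟩⟩
    obtain ⟨Na, Ka, hA⟩ := shift_approx g hg p.1 q.1 ε hε
    obtain ⟨Nb, Kb, hB⟩ := shift_approx g hg p.2 q.2 ε hε
    obtain ⟨n, hn, hgn⟩ := hplateau (max Na Nb) (max Ka Kb)
    obtain ⟨x1, hx1, hx1'⟩ := hA n (le_trans (le_max_left _ _) hn)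
      (fun j hj => le_trans (le_max_left _ _) (hgn j (by omega)))
    obtain ⟨x2, hx2, hx2'⟩ := hB n (le_trans (le_max_right _ _) hn)
      (fun j hj => le_trans (le_max_right _ _) (hgn j (by omega)))
    refine ⟨n, mem_hittingTimes_iff.2 ⟨(x1, x2), ?_, ?_⟩⟩
    · refine hWsub ⟨?_, ?_⟩
      · exact hb1 (by rw [mem_ball, dist_eq_norm]
                      exact lt_of_lt_of_le hx1 (le_trans (min_le_left _ _) (min_le_left _ _)))
      · exact hb2 (by rw [mem_ball, dist_eq_norm]
                      exact lt_of_lt_of_le hx2 (le_trans (min_le_left _ _) (min_le_right _ _)))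
    · rw [prodMap_pow_apply]
      refine hWsub' ⟨?_, ?_⟩
      · exact hb1' (by rw [mem_ball, dist_eq_norm]
                       exact lt_of_lt_of_le hx1' (le_trans (min_le_right _ _) (min_le_left _ _)))
      · exact hb2' (by rw [mem_ball, dist_eq_norm]
                       exact lt_of_lt_of_le hx2' (le_trans (min_le_right _ _) (min_le_right _ _)))
  obtain ⟨z, hz⟩ := trans_dense_orbit transQ
  refine ⟨z.1, z.2, ?_⟩
  have he : (fun n : ℕ => (((shiftOp g hg).prodMap (shiftOp g hg)) ^ n) z)
      = fun n : ℕ => (((shiftOp g hg) ^ n) z.1, ((shiftOp g hg) ^ n) z.2) :=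
    funext fun n => prodMap_pow_apply _ _ n z.1 z.2
  rw [he] at hz
  exact hz

end ShiftWM
section Final

open Set Metric TopologicalSpace

universe w

noncomputable def eqUlift : ULift.{w} (lp (fun _ : ℕ => ℂ) 1) ≃L[ℂ] lp (fun _ : ℕ => ℂ) 1 :=
  ContinuousLinearEquiv.ulift

noncomputable def uliftOp (S0 : lp (fun _ : ℕ => ℂ) 1 →L[ℂ] lp (fun _ : ℕ => ℂ) 1) :
    ULift.{w} (lp (fun _ : ℕ => ℂ) 1) →L[ℂ] ULift.{w} (lp (fun _ : ℕ => ℂ) 1) :=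
  ((eqUlift.{w}.symm.toContinuousLinearMap).comp S0).comp eqUlift.{w}.toContinuousLinearMap

lemma uliftOp_apply (S0 : lp (fun _ : ℕ => ℂ) 1 →L[ℂ] lp (fun _ : ℕ => ℂ) 1)
    (y : ULift.{w} (lp (fun _ : ℕ => ℂ) 1)) :
    uliftOp S0 y = eqUlift.symm (S0 (eqUlift y)) := rfl

lemma uliftOp_pow (S0 : lp (fun _ : ℕ => ℂ) 1 →L[ℂ] lp (fun _ : ℕ => ℂ) 1) (n : ℕ)
    (y : ULift.{w} (lp (fun _ : ℕ => ℂ) 1)) :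
    ((uliftOp S0) ^ n) y = eqUlift.symm ((S0 ^ n) (eqUlift y)) := by
  induction n generalizing y with
  | zero =>
      rw [pow_zero, pow_zero, ContinuousLinearMap.one_apply, ContinuousLinearMap.one_apply,
        ContinuousLinearEquiv.symm_apply_apply]
  | succ n ih =>
      rw [pow_succ', ContinuousLinearMap.mul_apply, ih y, uliftOp_apply,
        ContinuousLinearEquiv.apply_symm_apply, pow_succ', ContinuousLinearMap.mul_apply]

instance : SeparableSpace (ULift.{w} (lp (fun _ : ℕ => ℂ) 1)) :=
  (Homeomorph.ulift.symm.surjective.denseRange).separableSpace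
    Homeomorph.ulift.symm.continuous

lemma uliftOp_wm {S0 : lp (fun _ : ℕ => ℂ) 1 →L[ℂ] lp (fun _ : ℕ => ℂ) 1}
    (h : WeaklyMixing S0) : WeaklyMixing (uliftOp.{w} S0) := by
  obtain ⟨y1, y2, hd⟩ := h
  refine ⟨eqUlift.symm y1, eqUlift.symm y2, ?_⟩
  have he : (fun n : ℕ => (((uliftOp.{w} S0) ^ n) (eqUlift.symm y1),
      ((uliftOp.{w} S0) ^ n) (eqUlift.symm y2)))
      = (Prod.map (eqUlift.{w}.symm : lp (fun _ : ℕ => ℂ) 1 → ULift (lp (fun _ : ℕ => ℂ) 1))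
          eqUlift.{w}.symm) ∘ (fun n : ℕ => ((S0 ^ n) y1, (S0 ^ n) y2)) := by
    funext n
    simp only [Function.comp_apply, Prod.map, uliftOp_pow,
      ContinuousLinearEquiv.apply_symm_apply]
  rw [he]
  exact DenseRange.comp
    (Function.Surjective.denseRange
      (Prod.map_surjective.2 ⟨eqUlift.symm.surjective, eqUlift.symm.surjective⟩))
    hd (eqUlift.symm.continuous.prodMap eqUlift.symm.continuous)

/-- Direction (3) → (1). -/
theorem dir31 {X : Type*} [NormedAddCommGroup X] [NormedSpace ℂ X] [CompleteSpace X]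
    [SeparableSpace X] (T : X →L[ℂ] X)
    (H : ∀ (Y : Type w) [NormedAddCommGroup Y] [NormedSpace ℂ Y] [CompleteSpace Y]
      [SeparableSpace Y] (S : Y →L[ℂ] Y), WeaklyMixing S → Hypercyclic (T.prodMap S)) :
    SyndeticallyTransitive T := by
  intro U V hU hUne hV hVne
  by_contra hA
  have hagrow : ∀ k, k + 1 ≤ gapSeq (hittingTimes T U V) hA (k+1) := fun k =>
    gapSeq_ge (hittingTimes T U V) hA (k+1)
  set g := heightF (gapSeq (hittingTimes T U V) hA) with hgdef
  have hg : ∀ n, g (n+1) ≤ g n + 1 := fun n => (heightF_lip hagrow n).1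
  have hplat : ∀ N K : ℕ, ∃ n, N ≤ n ∧ ∀ j, j ≤ N → K ≤ g (n + j) := fun N K =>
    heightF_plateau hA N K
  have hwm := shiftOp_wm g hg hplat
  have hwmU := uliftOp_wm.{w} hwm
  obtain ⟨z, hz⟩ := H (ULift.{w} (lp (fun _ : ℕ => ℂ) 1)) (uliftOp (shiftOp g hg)) hwmU
  -- the window around the first basis vector
  set e0 : lp (fun _ : ℕ => ℂ) 1 := lp.single 1 0 1 with he0def
  set WU : Set (ULift.{w} (lp (fun _ : ℕ => ℂ) 1)) := (⇑eqUlift.{w}) ⁻¹' (ball e0 (1/2))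
    with hWUdef
  have hWU_open : IsOpen WU := isOpen_ball.preimage eqUlift.continuous
  have hWU_ne : WU.Nonempty := by
    refine ⟨eqUlift.symm e0, ?_⟩
    rw [hWUdef, Set.mem_preimage, ContinuousLinearEquiv.apply_symm_apply]
    exact mem_ball_self (by norm_num)
  obtain ⟨n, hn0, hnmem⟩ := dense_orbit_hitting_pos hz (hU.prod hWU_open)
    (hUne.prod hWU_ne) (hV.prod hWU_open) (hVne.prod hWU_ne)
  obtain ⟨pz, hpz, hpz2⟩ := mem_hittingTimes_iff.1 hnmem
  obtain ⟨xx, yy⟩ := pz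
  rw [prodMap_pow_apply] at hpz2
  have hnA : n ∈ hittingTimes T U V := mem_hittingTimes_iff.2 ⟨xx, hpz.1, hpz2.1⟩
  -- the shift side
  have hf1 : ‖eqUlift.{w} yy - e0‖ < 1/2 := by
    have := hpz.2
    rw [hWUdef, Set.mem_preimage, mem_ball, dist_eq_norm] at this
    exact this
  have hf2 : ‖(shiftOp g hg ^ n) (eqUlift.{w} yy) - e0‖ < 1/2 := by
    have h1 := hpz2.2
    rw [hWUdef, Set.mem_preimage, uliftOp_pow, ContinuousLinearEquiv.apply_symm_apply,
      mem_ball, dist_eq_norm] at h1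
    exact h1
  -- coordinates
  have hcoord1 : ‖(eqUlift.{w} yy : ∀ _ : ℕ, ℂ) n‖ < 1/2 := by
    have hle := lp.norm_apply_le_norm (E := fun _ : ℕ => ℂ) (p := 1) one_ne_zero
      (eqUlift.{w} yy - e0) n
    rw [lp.coeFn_sub, Pi.sub_apply] at hle
    have he0n : (e0 : ∀ _ : ℕ, ℂ) n = 0 := by
      rw [he0def, single_coord]
      simp only [Nat.pos_iff_ne_zero.1 hn0, if_false]
    rw [he0n, sub_zero] at hle
    exact lt_of_le_of_lt hle hf1
  have hcoord2 : ‖((shiftOp g hg ^ n) (eqUlift.{w} yy) : ∀ _ : ℕ, ℂ) 0 - 1‖ < 1/2 := by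
    have hle := lp.norm_apply_le_norm (E := fun _ : ℕ => ℂ) (p := 1) one_ne_zero
      ((shiftOp g hg ^ n) (eqUlift.{w} yy) - e0) 0
    rw [lp.coeFn_sub, Pi.sub_apply] at hle
    have he00 : (e0 : ∀ _ : ℕ, ℂ) 0 = 1 := by
      rw [he0def, single_coord]
      simp
    rw [he00] at hle
    exact lt_of_le_of_lt hle hf2
  have hS0 : ((shiftOp g hg ^ n) (eqUlift.{w} yy) : ∀ _ : ℕ, ℂ) 0
      = (2:ℂ) ^ g n * (eqUlift.{w} yy : ∀ _ : ℕ, ℂ) n := by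
    rw [shiftOp_pow_apply]
    have hg0 : g 0 = 0 := heightF_zero _
    rw [Nat.add_zero, hg0, pow_zero, div_one]
  by_cases hgn : g n = 0
  · rw [hS0, hgn, pow_zero, one_mul] at hcoord2
    have htri : (1:ℝ) ≤ ‖(eqUlift.{w} yy : ∀ _ : ℕ, ℂ) n‖
        + ‖(eqUlift.{w} yy : ∀ _ : ℕ, ℂ) n - 1‖ := by
      have : ‖(1:ℂ)‖ ≤ _ := norm_sub_le ((eqUlift.{w} yy : ∀ _ : ℕ, ℂ) n)
        ((eqUlift.{w} yy : ∀ _ : ℕ, ℂ) n - 1) |>.trans_eq' ?_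
      · simpa using this
      · congr 1
        abel
    linarith
  · exact heightF_pos_gap hA hgn hnA

end Final

universe v

theorem stmt10 {X : Type*} [NormedAddCommGroup X] [NormedSpace ℂ X] [CompleteSpace X]
    [TopologicalSpace.SeparableSpace X] (T : X →L[ℂ] X) :
    (SyndeticallyTransitive T ↔
      ∀ (Y : Type v) [NormedAddCommGroup Y] [NormedSpace ℂ Y] [CompleteSpace Y]
        [TopologicalSpace.SeparableSpace Y] (S : Y →L[ℂ] Y),
        WeaklyMixing S → WeaklyMixing (T.prodMap S)) ∧
    (SyndeticallyTransitive T ↔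
      ∀ (Y : Type v) [NormedAddCommGroup Y] [NormedSpace ℂ Y] [CompleteSpace Y]
        [TopologicalSpace.SeparableSpace Y] (S : Y →L[ℂ] Y),
        WeaklyMixing S → Hypercyclic (T.prodMap S)) := by
  have h31 := dir31.{v} (X := X) T
  have h12 : SyndeticallyTransitive T → ∀ (Y : Type v) [NormedAddCommGroup Y]
      [NormedSpace ℂ Y] [CompleteSpace Y] [TopologicalSpace.SeparableSpace Y]
      (S : Y →L[ℂ] Y), WeaklyMixing S → WeaklyMixing (T.prodMap S) := by
    intro h Y _ _ _ _ S hS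
    exact dir12 h hS
  constructor
  · refine ⟨fun h => h12 h, fun h => h31 ?_⟩
    intro Y _ _ _ _ S hS
    exact wm_hypercyclic (h Y S hS)
  · refine ⟨fun h Y _ _ _ _ S hS => wm_hypercyclic (dir12 h hS), fun h => h31 ?_⟩
    intro Y _ _ _ _ S hS
    exact h Y S hS
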